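/- Fix k ≥ 2, M > 0, λ > 0, and set δ = M²·k/(k−1). Let p_c(λ) = 1/(1 + (k−1)·e^{−λδ}) and p_j(λ) = e^{−λδ}/(1 + (k−1)·e^{−λδ}) for j ≠ c. Define T(λ) = M² · ∑_{j=1}^k p_j(λ)(1 − p_j(λ)) and ‖w‖² = λ²·k·M². Then ‖w‖² · T(λ) ≤ λ²·k³·M⁴ · e^{−λ M² k/(k−1)} / (1 + (k−1)·e^{−λ M² k/(k−1)})². -/

import Mathlib

/-- The quantitative content of Proposition 1: with `δ = M²k/(k−1)`, softmax probabilities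
`p_c = 1/(1+(k−1)e^{−λδ})`, `p_j = e^{−λδ}/(1+(k−1)e^{−λδ})` for `j ≠ c`, Hessian-trace
factor `T = M² ∑_j p_j(1−p_j)` and squared weight norm `‖w‖² = λ²kM²`, one has
`‖w‖² · T ≤ λ²k³M⁴ e^{−λM²k/(k−1)} / (1+(k−1)e^{−λM²k/(k−1)})²`. -/
theorem nc_implies_relative_flatness_bound (k : ℕ) (hk : 2 ≤ k)
    (M lam : ℝ) (hM : 0 < M) (hlam : 0 < lam) (c : Fin k)
    (δ : ℝ) (hδ : δ = M ^ 2 * (k : ℝ) / ((k : ℝ) - 1))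
    (p : Fin k → ℝ)
    (hp : ∀ j, p j = if j = c then
        1 / (1 + ((k : ℝ) - 1) * Real.exp (-(lam * δ)))
      else
        Real.exp (-(lam * δ)) / (1 + ((k : ℝ) - 1) * Real.exp (-(lam * δ))))
    (T : ℝ) (hT : T = M ^ 2 * ∑ j : Fin k, p j * (1 - p j))
    (wsq : ℝ) (hwsq : wsq = lam ^ 2 * (k : ℝ) * M ^ 2) :
    wsq * T ≤
      lam ^ 2 * (k : ℝ) ^ 3 * M ^ 4 *
          Real.exp (-(lam * (M ^ 2 * (k : ℝ) / ((k : ℝ) - 1)))) /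
        (1 + ((k : ℝ) - 1) * Real.exp (-(lam * (M ^ 2 * (k : ℝ) / ((k : ℝ) - 1))))) ^ 2 := by
  have hk2 : (2 : ℝ) ≤ (k : ℝ) := by exact_mod_cast hk
  set E : ℝ := Real.exp (-(lam * δ)) with hEdef
  have hE : 0 < E := Real.exp_pos _
  have hδpos : 0 < δ := by
    rw [hδ]
    apply div_pos
    · positivity
    · linarith
  have hE1 : E < 1 := by
    rw [hEdef]
    apply Real.exp_lt_one_iff.mpr
    nlinarith
  set D : ℝ := 1 + ((k : ℝ) - 1) * E with hDdef
  have hD : 0 < D := by nlinarith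
  set A : ℝ := 1 / D * (1 - 1 / D) with hA
  set B : ℝ := E / D * (1 - E / D) with hB
  have hS : ∑ j : Fin k, p j * (1 - p j) = A + ((k : ℝ) - 1) * B := by
    have h1 : ∀ j : Fin k, p j * (1 - p j) = B + (if j = c then A - B else 0) := by
      intro j
      rw [hp j]
      by_cases h : j = c <;> simp [h] <;> ring
    rw [Finset.sum_congr rfl fun j _ => h1 j, Finset.sum_add_distrib,
      Finset.sum_ite_eq' Finset.univ c, Finset.sum_const, Finset.card_univ,
      Fintype.card_fin]
    simp
    ring
  rw [hwsq, hT, hS, ← hδ]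
  have key : lam ^ 2 * (k : ℝ) * M ^ 2 * (M ^ 2 * (A + ((k : ℝ) - 1) * B)) =
      lam ^ 2 * (k : ℝ) * M ^ 4 * (((k : ℝ) - 1) * E * (2 + ((k : ℝ) - 2) * E)) / D ^ 2 := by
    rw [hA, hB]
    field_simp
    ring_nf
    rw [hDdef]
    ring
  rw [key]
  apply div_le_div_of_nonneg_right ?_ (by positivity)
  have h : ((k : ℝ) - 1) * (2 + ((k : ℝ) - 2) * E) ≤ (k : ℝ) ^ 2 := by
    nlinarith [mul_nonneg (mul_nonneg (by linarith : (0:ℝ) ≤ (k:ℝ) - 2)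
      (by linarith : (0:ℝ) ≤ (k:ℝ) - 1)) (by linarith : (0:ℝ) ≤ 1 - E)]
  have hpos : 0 ≤ lam ^ 2 * (k : ℝ) * M ^ 4 * E := by positivity
  calc lam ^ 2 * (k : ℝ) * M ^ 4 * (((k : ℝ) - 1) * E * (2 + ((k : ℝ) - 2) * E))
      = (lam ^ 2 * (k : ℝ) * M ^ 4 * E) * (((k : ℝ) - 1) * (2 + ((k : ℝ) - 2) * E)) := by ring
    _ ≤ (lam ^ 2 * (k : ℝ) * M ^ 4 * E) * ((k : ℝ) ^ 2) := mul_le_mul_of_nonneg_left h hpos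
    _ = lam ^ 2 * (k : ℝ) ^ 3 * M ^ 4 * E := by ring
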